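/- Let (M, g, f) be a Miao-Tam critical metric with harmonic Weyl tensor such that W_{i1j1} ≡ 0 at every regular point (where e₁ = -∇f/|∇f|). Then the tensor T vanishes identically: |T|² = -(n-1)/(n-2)·W_{ijkl}∇_l f(∇_j f R_{ik} - ∇_i f R_{jk}) = 0, and consequently W_{ijkl}∇_l f = 0. -/
import Mathlib


/-- For a Miao-Tam critical metric with harmonic Weyl tensor such
that `W_{i1j1} ≡ 0` at every regular point (`e₁ = -∇f/|∇f|`), the auxiliary tensor
`T` vanishes identically:
`|T|² = -(n-1)/(n-2)·W_{ijkl}∇ₗf(∇ⱼfR_{ik} - ∇ᵢfR_{jk}) = 0`,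
and consequently `W_{ijkl}∇ₗf = 0`.  Stated at a regular point in an adapted
orthonormal frame with `∇f = -c·e₁`, `c > 0`, where vanishing of the Cotton
tensor gives `T_{ijk} = -W_{ijkl}∇ₗf`. -/
theorem T_vanishes_and_weyl_gradf_zero (n : ℕ) (hn : 3 ≤ n)
    (e1 : Fin n) (c R : ℝ) (hc : 0 < c)
    (Ric : Fin n → Fin n → ℝ) (df : Fin n → ℝ)
    (W : Fin n → Fin n → Fin n → Fin n → ℝ)
    (T : Fin n → Fin n → Fin n → ℝ)
    (hRicSym : ∀ i j, Ric i j = Ric j i)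
    -- ∇f = -|∇f| e₁
    (hdf : ∀ l, df l = if l = e1 then -c else 0)
    -- ∇f is a Ricci eigenvector
    (hEig : ∀ i, ∑ k, Ric i k * df k = Ric e1 e1 * df i)
    -- the auxiliary tensor T
    (hT : ∀ i j k, T i j k
      = ((n : ℝ) - 1) / ((n : ℝ) - 2) * (Ric i k * df j - Ric j k * df i)
        - R / ((n : ℝ) - 2)
          * ((if i = k then (1 : ℝ) else 0) * df j
            - (if j = k then (1 : ℝ) else 0) * df i)
        + 1 / ((n : ℝ) - 2)
          * ((if i = k then (1 : ℝ) else 0) * (∑ s, Ric j s * df s)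
            - (if j = k then (1 : ℝ) else 0) * (∑ s, Ric i s * df s)))
    -- vanishing Cotton tensor: 0 = fC = T + W(·,·,·,∇f)
    (hTW : ∀ i j k, T i j k = -(∑ l, W i j k l * df l))
    -- Wᵛ = 0
    (hWv : ∀ i j, W i e1 j e1 = 0)
    -- trace-freeness of the Weyl tensor
    (hWtf13 : ∀ j l, ∑ i, W i j i l = 0)
    (hWtf23 : ∀ i l, ∑ j, W i j j l = 0) :
    ((∑ i, ∑ j, ∑ k, (T i j k) ^ 2)
      = -(((n : ℝ) - 1) / ((n : ℝ) - 2))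
          * ∑ i, ∑ j, ∑ k, ∑ l,
              W i j k l * df l * (df j * Ric i k - df i * Ric j k))
    ∧ ((∑ i, ∑ j, ∑ k, (T i j k) ^ 2) = 0)
    ∧ (∀ i j k, (∑ l, W i j k l * df l) = 0) := by
  have hc' : c ≠ 0 := ne_of_gt hc
  -- collapse sums against df
  have hsum : ∀ i j k, (∑ l, W i j k l * df l) = -c * W i j k e1 := by
    intro i j k
    rw [Finset.sum_eq_single e1]
    · rw [hdf]; simp [mul_comm]
    · intro b _ hb; rw [hdf]; simp [hb]
    · simp
  have hT0 : ∀ i k, T i e1 k = 0 := by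
    intro i k
    rw [hTW, hsum, hWv]; ring
  -- the auxiliary quantity F
  set F : Fin n → Fin n → ℝ := fun i k =>
    ((n : ℝ) - 1) / ((n : ℝ) - 2) * Ric i k
      - R / ((n : ℝ) - 2) * (if i = k then (1 : ℝ) else 0)
      + 1 / ((n : ℝ) - 2) * (if i = k then (1 : ℝ) else 0) * Ric e1 e1 with hFdef
  have hTF : ∀ i j k, T i j k = F i k * df j - F j k * df i := by
    intro i j k
    rw [hT, hEig, hEig, hFdef]
    ring
  have hF0 : ∀ i k, i ≠ e1 → F i k = 0 := by
    intro i k hi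
    have h := hTF i e1 k
    rw [hT0, hdf e1, hdf i] at h
    simp [hi] at h
    rcases h with h | h
    · exact h
    · exact absurd h hc'
  have hTzero : ∀ i j k, T i j k = 0 := by
    intro i j k
    rw [hTF, hdf i, hdf j]
    by_cases hi : i = e1 <;> by_cases hj : j = e1
    · subst hi; subst hj; ring
    · subst hi; simp [hj, hF0 j k hj]
    · subst hj; simp [hi, hF0 i k hi]
    · simp [hi, hj]
  have hWdf : ∀ i j k, (∑ l, W i j k l * df l) = 0 := by
    intro i j k
    have h := hTW i j k
    rw [hTzero] at h
    linarith
  refine ⟨?_, ?_, hWdf⟩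
  · have hR : ∀ i j k : Fin n,
        (∑ l, W i j k l * df l * (df j * Ric i k - df i * Ric j k)) = 0 := by
      intro i j k
      rw [← Finset.sum_mul, hWdf, zero_mul]
    simp [hTzero, hR]
  · simp [hTzero]
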